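/- Let G be a finite group, let r be an m-tuple of positive integers, and let R ⊆ gen_m(G) contain exactly one representative of each orbit-equivalence class contained in gen_m(G). Then the number of generating m-tuples of type r satisfies |gen_r(G)| = Σ_{a ∈ R} Σ_s ∏_{i=0}^{m−1} λ_{s_i}(A_i^a, A_{i+1}^a), where for each a the inner sum runs over all distinct m-tuples s of positive integers whose multiset of entries equals that of r, and {A_i^a} are the nested subgroups associated to a. Consequently P_r(G) = |G|^{−m} |gen_r(G)| is given by this double sum divided by |G|^m. -/

import Mathlib

/-- The nested subgroups associated to an `m`-tuple `a`:
`A 0 = ⊥` and `A (i+1) = ⟨A i, a i⟩`. -/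
def nestedSubgroup {G : Type*} [Group G] {m : ℕ} (a : Fin m → G) : ℕ → Subgroup G
  | 0 => ⊥
  | i + 1 =>
      if h : i < m then nestedSubgroup a i ⊔ Subgroup.closure {a ⟨i, h⟩}
      else nestedSubgroup a i

/-- `A` lies in the orbit of `B` under the natural action of `Aut G` on subgroups. -/
def inAutOrbit {G : Type*} [Group G] (A B : Subgroup G) : Prop :=
  ∃ φ : MulAut G, Subgroup.map φ.toMonoidHom B = A

/-- `λ_i(A, B)`: the number of `x ∈ G` of order `i` with `⟨A, x⟩` in the
`Aut G`-orbit of `B`. -/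
noncomputable def lambdaConstOrd {G : Type*} [Group G] (i : ℕ) (A B : Subgroup G) : ℕ :=
  Nat.card {x : G // orderOf x = i ∧ inAutOrbit (A ⊔ Subgroup.closure {x}) B}

/-- Two `m`-tuples are orbit-equivalent if their nested subgroups are in the same
`Aut G`-orbits. -/
def orbitEquiv {G : Type*} [Group G] {m : ℕ} (a b : Fin m → G) : Prop :=
  ∀ i ≤ m, inAutOrbit (nestedSubgroup a i) (nestedSubgroup b i)

/-- The multiset of orders of the entries of an `m`-tuple. -/
noncomputable def tupleType {G : Type*} [Group G] {m : ℕ} (b : Fin m → G) : Multiset ℕ :=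
  Multiset.map (fun i => orderOf (b i)) Finset.univ.val


noncomputable def cfilter {α : Type*} [Fintype α] (p : α → Prop) : Finset α :=
  @Finset.filter α p (Classical.decPred p) Finset.univ

lemma mem_cfilter {α : Type*} [Fintype α] {p : α → Prop} {x : α} : x ∈ cfilter p ↔ p x := by
  simp [cfilter]

section Orbit
variable {G : Type*} [Group G]

lemma map_map_inv (φ : MulAut G) (A : Subgroup G) :
    Subgroup.map φ⁻¹.toMonoidHom (Subgroup.map φ.toMonoidHom A) = A := by
  rw [Subgroup.map_map]; convert Subgroup.map_id A; ext x; simp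

lemma inAutOrbit_refl (A : Subgroup G) : inAutOrbit A A :=
  ⟨1, by ext x; simp [Subgroup.mem_map]⟩

lemma inAutOrbit_symm {A B : Subgroup G} (h : inAutOrbit A B) : inAutOrbit B A := by
  obtain ⟨φ, h⟩ := h
  exact ⟨φ⁻¹, by rw [← h, map_map_inv]⟩

lemma inAutOrbit_map_iff (φ : MulAut G) {A B : Subgroup G} :
    inAutOrbit (Subgroup.map φ.toMonoidHom A) B ↔ inAutOrbit A B := by
  constructor
  · rintro ⟨ψ, h⟩
    refine ⟨φ⁻¹ * ψ, ?_⟩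
    have := congrArg (Subgroup.map φ⁻¹.toMonoidHom) h
    rw [map_map_inv] at this
    rw [← this, Subgroup.map_map]
    rfl
  · rintro ⟨ψ, h⟩
    refine ⟨φ * ψ, ?_⟩
    rw [← h, Subgroup.map_map]
    rfl

lemma map_sup_closure (φ : MulAut G) (A : Subgroup G) (x : G) :
    Subgroup.map φ.toMonoidHom (A ⊔ Subgroup.closure {x})
      = Subgroup.map φ.toMonoidHom A ⊔ Subgroup.closure {φ x} := by
  rw [Subgroup.map_sup, MonoidHom.map_closure]; simp

lemma lambda_map (i : ℕ) (φ : MulAut G) (A B : Subgroup G) :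
    lambdaConstOrd i (Subgroup.map φ.toMonoidHom A) B = lambdaConstOrd i A B := by
  unfold lambdaConstOrd
  apply Nat.card_congr
  refine ⟨fun x => ⟨φ⁻¹ x.1, ?_, ?_⟩, fun x => ⟨φ x.1, ?_, ?_⟩, fun x => Subtype.ext (by simp), fun x => by simp⟩
  · have := orderOf_injective φ⁻¹.toMonoidHom φ⁻¹.injective x.1
    simp only [MulEquiv.coe_toMonoidHom] at this
    rw [this]; exact x.2.1
  · have h2 := x.2.2
    have key : A ⊔ Subgroup.closure {φ⁻¹ x.1}
        = Subgroup.map φ⁻¹.toMonoidHom (Subgroup.map φ.toMonoidHom A ⊔ Subgroup.closure {x.1}) := by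
      rw [map_sup_closure, map_map_inv]
    rw [key, inAutOrbit_map_iff]
    exact h2
  · have := orderOf_injective φ.toMonoidHom φ.injective x.1
    simp only [MulEquiv.coe_toMonoidHom] at this
    rw [this]; exact x.2.1
  · rw [← map_sup_closure, inAutOrbit_map_iff]; exact x.2.2

lemma lambda_congr {i : ℕ} {A A' B : Subgroup G} (h : inAutOrbit A' A) :
    lambdaConstOrd i A' B = lambdaConstOrd i A B := by
  obtain ⟨φ, rfl⟩ := h
  exact lambda_map i φ A B

end Orbit

section Nested
variable {G : Type*} [Group G] {m : ℕ}

lemma nested_congr {b c : Fin m → G} (i : ℕ)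
    (h : ∀ j : Fin m, (j : ℕ) < i → b j = c j) :
    nestedSubgroup b i = nestedSubgroup c i := by
  induction i with
  | zero => rfl
  | succ k ih =>
    have ihk := ih (fun j hj => h j (Nat.lt_succ_of_lt hj))
    unfold nestedSubgroup
    split
    · rw [ihk, h ⟨k, by assumption⟩ (Nat.lt_succ_self k)]
    · exact ihk

lemma nested_succ (b : Fin m → G) {k : ℕ} (hkm : k < m) :
    nestedSubgroup b (k + 1) = nestedSubgroup b k ⊔ Subgroup.closure {b ⟨k, hkm⟩} := by
  rw [nestedSubgroup, dif_pos hkm]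

end Nested

section Perm

lemma exists_perm_of_map_eq {α β : Type*} [Fintype α] [DecidableEq α] [DecidableEq β]
    {f g : α → β}
    (h : Multiset.map f Finset.univ.val = Multiset.map g Finset.univ.val) :
    ∃ σ : Equiv.Perm α, g ∘ σ = f := by
  classical
  have hcard : ∀ v : β, Fintype.card (f ⁻¹' {v}) = Fintype.card (g ⁻¹' {v}) := by
    intro v
    have key : ∀ q : α → β, Fintype.card (q ⁻¹' {v})
        = Multiset.count v (Multiset.map q Finset.univ.val) := by
      intro q
      rw [Multiset.count_map]
      have e1 : Fintype.card (q ⁻¹' {v}) = Fintype.card {x // v = q x} :=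
        Fintype.card_congr (Equiv.subtypeEquivRight (by intro x; simp [eq_comm]))
      rw [e1, Fintype.card_subtype]
      rfl
    rw [key f, key g, h]
  have e : ∀ v : β, (f ⁻¹' {v}) ≃ (g ⁻¹' {v}) := fun v => Fintype.equivOfCardEq (hcard v)
  exact ⟨Equiv.ofFiberEquiv e, funext fun a => Equiv.ofFiberEquiv_map e a⟩

lemma map_univ_perm {α β : Type*} [Fintype α] (r : α → β) (σ : Equiv.Perm α) :
    Multiset.map (r ∘ σ) Finset.univ.val = Multiset.map r Finset.univ.val := by
  rw [← Multiset.map_map]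
  congr 1
  have h : Finset.univ.map σ.toEmbedding = Finset.univ := Finset.map_univ_equiv σ
  calc Multiset.map (⇑σ) Finset.univ.val = (Finset.univ.map σ.toEmbedding).val := rfl
    _ = Finset.univ.val := by rw [h]

end Perm

section Count

variable {G : Type*} [Group G] [Fintype G] [DecidableEq G] {m : ℕ}

/-- Partial condition: orders prescribed below `k`, orbit conditions up to `k`. -/
def Pk (a : Fin m → G) (s : Fin m → ℕ) (k : ℕ) (b : Fin m → G) : Prop :=
  (∀ i : Fin m, (i : ℕ) < k → orderOf (b i) = s i) ∧
  ∀ i ≤ k, inAutOrbit (nestedSubgroup b i) (nestedSubgroup a i)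

lemma Pk_congr (a : Fin m → G) (s : Fin m → ℕ) (k : ℕ) {b c : Fin m → G}
    (h : ∀ j : Fin m, (j : ℕ) < k → b j = c j) :
    Pk a s k b ↔ Pk a s k c := by
  constructor <;> rintro ⟨h1, h2⟩
  · refine ⟨fun i hi => by rw [← h i hi]; exact h1 i hi, fun i hi => ?_⟩
    rw [← nested_congr i (fun j hj => h j (lt_of_lt_of_le hj hi))]
    exact h2 i hi
  · refine ⟨fun i hi => by rw [h i hi]; exact h1 i hi, fun i hi => ?_⟩
    rw [nested_congr i (fun j hj => h j (lt_of_lt_of_le hj hi))]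
    exact h2 i hi

lemma count_lemma (a : Fin m → G) (s : Fin m → ℕ) :
    ∀ k, k ≤ m →
    (cfilter (Pk a s k)).card * Fintype.card G ^ k
      = (∏ i ∈ Finset.univ.filter (fun i : Fin m => (i : ℕ) < k),
          lambdaConstOrd (s i) (nestedSubgroup a (i : ℕ)) (nestedSubgroup a ((i : ℕ) + 1)))
        * Fintype.card G ^ m := by
  intro k
  induction k with
  | zero =>
    intro _
    have h1 : cfilter (Pk a s 0) = Finset.univ := by
      apply Finset.eq_univ_iff_forall.2
      intro b
      rw [mem_cfilter]
      refine ⟨fun i hi => absurd hi (Nat.not_lt_zero _), fun i hi => ?_⟩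
      interval_cases i
      exact inAutOrbit_refl _
    have h2 : (Finset.univ.filter (fun i : Fin m => (i : ℕ) < 0)) = ∅ := by
      apply Finset.eq_empty_iff_forall_notMem.2
      intro i hi
      simp at hi
    rw [h1, h2, Finset.prod_empty, Finset.card_univ, Fintype.card_fun, Fintype.card_fin]
    ring
  | succ k ih =>
    intro hk1
    have hkm : k < m := hk1
    have hkle : k ≤ m := le_of_lt hkm
    set κ : Fin m := ⟨k, hkm⟩ with hκ
    -- the intermediate target set
    set t : Finset (Fin m → G) := cfilter (fun c => Pk a s k c ∧ c κ = 1) with ht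
    set lam := lambdaConstOrd (s κ) (nestedSubgroup a k) (nestedSubgroup a (k + 1)) with hlam
    -- updating at κ preserves Pk k
    have hupd : ∀ (b : Fin m → G) (x : G), Pk a s k b ↔ Pk a s k (Function.update b κ x) := by
      intro b x
      apply Pk_congr
      intro j hj
      have : j ≠ κ := by
        intro hjk
        rw [hjk] at hj
        exact absurd hj (lt_irrefl k)
      rw [Function.update_of_ne this]
    -- Step A : card of P_{k+1} filter
    have hA : (cfilter (Pk a s (k + 1))).card = t.card * lam := by
      have hmaps : ∀ b ∈ cfilter (Pk a s (k + 1)), Function.update b κ 1 ∈ t := by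
        intro b hb
        rw [mem_cfilter] at hb ⊢
        obtain ⟨h1, h2⟩ := hb
        refine ⟨(hupd b 1).1 ⟨fun i hi => h1 i (Nat.lt_succ_of_lt hi),
          fun i hi => h2 i (Nat.le_succ_of_le hi)⟩, Function.update_self κ 1 b⟩
      rw [Finset.card_eq_sum_card_fiberwise hmaps]
      rw [Finset.sum_congr rfl (fun c hc => ?_), Finset.sum_const, smul_eq_mul]
      -- fiber card = lam
      rw [mem_cfilter] at hc
      obtain ⟨hcP, hc1⟩ := hc
      have horb : inAutOrbit (nestedSubgroup c k) (nestedSubgroup a k) := hcP.2 k le_rfl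
      rw [hlam, ← lambda_congr (B := nestedSubgroup a (k + 1)) (i := s κ) horb]
      rw [← Nat.card_eq_finsetCard]
      apply Nat.card_congr
      refine ⟨fun b => ⟨b.1 κ, ?_, ?_⟩, fun x => ⟨Function.update c κ x.1, ?_⟩, ?_, ?_⟩
      · have hb := b.2
        rw [Finset.mem_filter, mem_cfilter] at hb
        exact hb.1.1 κ (Nat.lt_succ_self k)
      · have hb := b.2
        rw [Finset.mem_filter, mem_cfilter] at hb
        have h2 := hb.1.2 (k + 1) le_rfl
        rw [nested_succ b.1 hkm] at h2
        have hbc : nestedSubgroup b.1 k = nestedSubgroup c k := by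
          apply nested_congr
          intro j hj
          have hne : j ≠ κ := by
            intro hjk; rw [hjk] at hj; exact absurd hj (lt_irrefl k)
          have := congrFun hb.2 j
          rw [Function.update_of_ne hne] at this
          exact this
        rwa [hbc] at h2
      · rw [Finset.mem_filter, mem_cfilter]
        constructor
        · constructor
          · intro i hi
            by_cases hik : i = κ
            · subst hik
              rw [Function.update_self]
              exact x.2.1
            · have hilt : (i : ℕ) < k := by
                rcases Nat.lt_succ_iff_lt_or_eq.1 hi with h | h
                · exact h
                · exact absurd (Fin.ext h : i = κ) hik
              rw [Function.update_of_ne hik]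
              exact hcP.1 i hilt
          · intro i hi
            rcases Nat.lt_succ_iff_lt_or_eq.1 (Nat.lt_succ_of_le hi) with h | h
            · exact ((hupd c x.1).1 hcP).2 i (by omega)
            · subst h
              rw [nested_succ _ hkm]
              have : nestedSubgroup (Function.update c κ x.1) k = nestedSubgroup c k := by
                apply nested_congr
                intro j hj
                have hne : j ≠ κ := by
                  intro hjk; rw [hjk] at hj; exact absurd hj (lt_irrefl k)
                rw [Function.update_of_ne hne]
              rw [this, Function.update_self]
              exact x.2.2
        · rw [Function.update_idem, ← hc1, Function.update_eq_self]
      · intro b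
        apply Subtype.ext
        have hb := b.2
        rw [Finset.mem_filter] at hb
        show Function.update c κ (b.1 κ) = b.1
        funext j
        by_cases hjk : j = κ
        · subst hjk; rw [Function.update_self]
        · rw [Function.update_of_ne hjk]
          have := congrFun hb.2 j
          rw [Function.update_of_ne hjk] at this
          exact this.symm
      · intro x
        apply Subtype.ext
        exact Function.update_self κ x.1 c
    -- Step B : card of P_k filter
    have hB : (cfilter (Pk a s k)).card = t.card * Fintype.card G := by
      have hmaps : ∀ b ∈ cfilter (Pk a s k), Function.update b κ 1 ∈ t := by
        intro b hb
        rw [mem_cfilter] at hb ⊢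
        exact ⟨(hupd b 1).1 hb, Function.update_self κ 1 b⟩
      rw [Finset.card_eq_sum_card_fiberwise hmaps]
      rw [Finset.sum_congr rfl (fun c hc => ?_), Finset.sum_const, smul_eq_mul]
      rw [mem_cfilter] at hc
      rw [← Nat.card_eq_finsetCard, ← Nat.card_eq_fintype_card]
      apply Nat.card_congr
      refine ⟨fun b => b.1 κ, fun x => ⟨Function.update c κ x, ?_⟩, ?_, fun x => Function.update_self κ x c⟩
      · rw [Finset.mem_filter, mem_cfilter]
        exact ⟨(hupd c x).1 hc.1, by rw [Function.update_idem, ← hc.2, Function.update_eq_self]⟩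
      · intro b
        apply Subtype.ext
        have hb := b.2
        rw [Finset.mem_filter] at hb
        show Function.update c κ (b.1 κ) = b.1
        funext j
        by_cases hjk : j = κ
        · subst hjk; rw [Function.update_self]
        · rw [Function.update_of_ne hjk]
          have := congrFun hb.2 j
          rw [Function.update_of_ne hjk] at this
          exact this.symm
    -- the product splits
    have hprod : (Finset.univ.filter (fun i : Fin m => (i : ℕ) < k + 1))
        = insert κ (Finset.univ.filter (fun i : Fin m => (i : ℕ) < k)) := by
      ext i
      simp only [Finset.mem_filter, Finset.mem_univ, true_and, Finset.mem_insert]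
      constructor
      · intro hi
        rcases Nat.lt_succ_iff_lt_or_eq.1 hi with h | h
        · exact Or.inr h
        · exact Or.inl (Fin.ext h)
      · rintro (h | h)
        · subst h; exact Nat.lt_succ_self k
        · exact Nat.lt_succ_of_lt h
    have hnotmem : κ ∉ Finset.univ.filter (fun i : Fin m => (i : ℕ) < k) := by
      simp [hκ]
    -- combine
    have ihk := ih hkle
    calc (cfilter (Pk a s (k + 1))).card * Fintype.card G ^ (k + 1)
        = (cfilter (Pk a s k)).card * Fintype.card G ^ k * lam := by
          rw [hA, hB]; ring
      _ = ((∏ i ∈ Finset.univ.filter (fun i : Fin m => (i : ℕ) < k),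
            lambdaConstOrd (s i) (nestedSubgroup a (i : ℕ)) (nestedSubgroup a ((i : ℕ) + 1)))
          * Fintype.card G ^ m) * lam := by rw [ihk]
      _ = (∏ i ∈ Finset.univ.filter (fun i : Fin m => (i : ℕ) < k + 1),
            lambdaConstOrd (s i) (nestedSubgroup a (i : ℕ)) (nestedSubgroup a ((i : ℕ) + 1)))
          * Fintype.card G ^ m := by
          rw [hprod, Finset.prod_insert hnotmem]
          ring

end Count

/-- If `R` contains exactly one representative of each orbit-equivalence class of
generating `m`-tuples, then the number of generating `m`-tuples of type `r` is
`∑_{a ∈ R} ∑_s ∏_{i<m} λ_{s i}(A_i^a, A_{i+1}^a)`, the inner sum being over all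
distinct `m`-tuples `s` whose multiset of entries equals that of `r`; consequently
`P_r(G)` equals this double sum divided by `|G|^m`. -/
theorem card_generating_tuples_of_type_eq_sum {G : Type*} [Group G] [Fintype G]
    [DecidableEq G] {m : ℕ} (r : Fin m → ℕ) (hr : ∀ i, 0 < r i)
    (R : Finset (Fin m → G))
    (hRgen : ∀ a ∈ R, nestedSubgroup a m = ⊤)
    (hRrep : ∀ b : Fin m → G, nestedSubgroup b m = ⊤ →
      ∃! a, a ∈ R ∧ orbitEquiv a b) :
    (Nat.card {b : Fin m → G // nestedSubgroup b m = ⊤ ∧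
          tupleType b = Multiset.map r Finset.univ.val} =
        ∑ a ∈ R, ∑ s ∈ Finset.image (fun σ : Equiv.Perm (Fin m) => r ∘ σ) Finset.univ,
          ∏ i : Fin m,
            lambdaConstOrd (s i) (nestedSubgroup a (i : ℕ)) (nestedSubgroup a ((i : ℕ) + 1))) ∧
      ((Nat.card {b : Fin m → G // nestedSubgroup b m = ⊤ ∧
          tupleType b = Multiset.map r Finset.univ.val} : ℚ) / (Fintype.card G) ^ m =
        (∑ a ∈ R, ∑ s ∈ Finset.image (fun σ : Equiv.Perm (Fin m) => r ∘ σ) Finset.univ,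
          ∏ i : Fin m,
            (lambdaConstOrd (s i) (nestedSubgroup a (i : ℕ))
              (nestedSubgroup a ((i : ℕ) + 1)) : ℚ)) / (Fintype.card G) ^ m) := by
  classical
  set I := Finset.image (fun σ : Equiv.Perm (Fin m) => r ∘ σ) Finset.univ with hI
  set pick : (Fin m → G) → (Fin m → G) := fun b =>
    if h : nestedSubgroup b m = ⊤ then (hRrep b h).choose else b with hpick
  set f : (Fin m → G) → (Fin m → G) × (Fin m → ℕ) :=
    fun b => (pick b, fun i => orderOf (b i)) with hf
  set N : Finset (Fin m → G) := cfilter (fun b => nestedSubgroup b m = ⊤ ∧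
      tupleType b = Multiset.map r Finset.univ.val) with hN
  have hNat : Nat.card {b : Fin m → G // nestedSubgroup b m = ⊤ ∧
      tupleType b = Multiset.map r Finset.univ.val} = N.card := by
    rw [← Nat.card_eq_finsetCard]
    exact Nat.card_congr (Equiv.subtypeEquivRight (fun b =>
      (mem_cfilter (p := fun b => nestedSubgroup b m = ⊤ ∧
        tupleType b = Multiset.map r Finset.univ.val) (x := b)).symm))
  have key : N.card = ∑ a ∈ R, ∑ s ∈ I, ∏ i : Fin m,
      lambdaConstOrd (s i) (nestedSubgroup a (i : ℕ)) (nestedSubgroup a ((i : ℕ) + 1)) := by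
    have hmaps : ∀ b ∈ N, f b ∈ R ×ˢ I := by
      intro b hb
      rw [hN, mem_cfilter] at hb
      obtain ⟨hb1, hb2⟩ := hb
      rw [Finset.mem_product]
      constructor
      · show pick b ∈ R
        rw [hpick]
        simp only [dif_pos hb1]
        exact (hRrep b hb1).choose_spec.1.1
      · show (fun i => orderOf (b i)) ∈ I
        rw [hI, Finset.mem_image]
        have heq : Multiset.map (fun i => orderOf (b i)) Finset.univ.val
            = Multiset.map r Finset.univ.val := hb2
        obtain ⟨σ, hσ⟩ := exists_perm_of_map_eq heq
        exact ⟨σ, Finset.mem_univ σ, hσ⟩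
    rw [Finset.card_eq_sum_card_fiberwise hmaps, Finset.sum_product]
    refine Finset.sum_congr rfl (fun a ha => Finset.sum_congr rfl (fun s hs => ?_))
    have hfib : N.filter (fun b => f b = (a, s)) = cfilter (Pk a s m) := by
      ext b
      rw [Finset.mem_filter, hN, mem_cfilter, mem_cfilter]
      constructor
      · rintro ⟨⟨hb1, hb2⟩, hfb⟩
        rw [Prod.ext_iff] at hfb
        obtain ⟨hfa, hfs⟩ := hfb
        have hpa : (hRrep b hb1).choose = a := by
          have : pick b = (hRrep b hb1).choose := by rw [hpick]; simp only [dif_pos hb1]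
          rw [← this]; exact hfa
        have spec := (hRrep b hb1).choose_spec.1
        rw [hpa] at spec
        refine ⟨fun i _ => congrFun hfs i, fun i hi => inAutOrbit_symm (spec.2 i hi)⟩
      · intro hP
        have horders : (fun i => orderOf (b i)) = s := funext fun i => hP.1 i i.isLt
        have hb1 : nestedSubgroup b m = ⊤ := by
          obtain ⟨φ, hφ⟩ := hP.2 m le_rfl
          rw [hRgen a ha] at hφ
          rw [← hφ]
          exact Subgroup.map_top_of_surjective φ.toMonoidHom φ.surjective
        have horb : orbitEquiv a b := fun i hi => inAutOrbit_symm (hP.2 i hi)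
        have hb2 : tupleType b = Multiset.map r Finset.univ.val := by
          rw [hI, Finset.mem_image] at hs
          obtain ⟨σ, _, hσ⟩ := hs
          show Multiset.map (fun i => orderOf (b i)) Finset.univ.val
            = Multiset.map r Finset.univ.val
          rw [horders, ← hσ]
          exact map_univ_perm r σ
        refine ⟨⟨hb1, hb2⟩, Prod.ext ?_ horders⟩
        show pick b = a
        rw [hpick]
        simp only [dif_pos hb1]
        exact (hRrep b hb1).unique (hRrep b hb1).choose_spec.1 ⟨ha, horb⟩
    rw [hfib]
    have hcl := count_lemma a s m le_rfl
    have huniv : Finset.univ.filter (fun i : Fin m => (i : ℕ) < m) = Finset.univ := by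
      apply Finset.filter_true_of_mem
      intro i _
      exact i.isLt
    rw [huniv] at hcl
    exact Nat.eq_of_mul_eq_mul_right (pow_pos Fintype.card_pos m) hcl
  constructor
  · rw [hNat, key]
  · rw [hNat, key]
    push_cast
    ring
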